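/- Let d, t ≥ 1, let W₀ ∈ ℝ^{d×d} be symmetric positive definite, let X ∈ ℝ^{t×d}, θ* ∈ ℝ^d, η ∈ ℝ^t, set W = W₀ + XᵀX, Y = Xθ* + η, and θ̂ = W⁻¹XᵀY. Then √((θ̂ − θ*)ᵀ W (θ̂ − θ*)) ≥ √((Xᵀη)ᵀ W⁻¹ (Xᵀη)) − (λmax(W₀)/√(λmin(W₀)))·‖θ*‖₂, where λmax(W₀) and λmin(W₀) are the largest and smallest eigenvalues of W₀. In particular this uses the bound (W₀θ*)ᵀW⁻¹(W₀θ*) ≤ (λmax(W₀)²/λmin(W₀))·‖θ*‖₂². -/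

import Mathlib

open Matrix

noncomputable def NormedAddCommGroup.ofMatrix {n : Type*} [Fintype n] {M : Matrix n n ℝ}
    (hM : M.PosDef) : NormedAddCommGroup (n → ℝ) :=
  @InnerProductSpace.Core.toNormedAddCommGroup ℝ (n → ℝ) _ _ _
    { inner := fun x y => dotProduct (star x) (M *ᵥ y)
      conj_inner_symm := fun x y => by
        simp only [star_trivial, starRingEnd_apply]
        rw [dotProduct_mulVec, ← mulVec_transpose, dotProduct_comm,
          ← conjTranspose_eq_transpose_of_trivial, hM.isHermitian.eq]
      re_inner_nonneg := fun x => hM.posSemidef.dotProduct_mulVec_nonneg x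
      add_left := fun x y z => by simp only [star_add, add_dotProduct]
      smul_left := fun x y r => by simp [smul_dotProduct]
      definite := fun x hx => by
        by_contra h
        exact (hM.dotProduct_mulVec_pos h).ne' hx }

noncomputable def InnerProductSpace.ofMatrix {n : Type*} [Fintype n] {M : Matrix n n ℝ}
    (hM : M.PosDef) :
    @InnerProductSpace ℝ (n → ℝ) _ (NormedAddCommGroup.ofMatrix hM).toSeminormedAddCommGroup :=
  InnerProductSpace.ofCore _

lemma norm_ofMatrix {n : Type*} [Fintype n] {M : Matrix n n ℝ} (hM : M.PosDef) (v : n → ℝ) :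
    @norm _ (NormedAddCommGroup.ofMatrix hM).toNorm v = Real.sqrt (v ⬝ᵥ M *ᵥ v) := by
  have h := @norm_eq_sqrt_real_inner (n → ℝ)
    (NormedAddCommGroup.ofMatrix hM).toSeminormedAddCommGroup
    (InnerProductSpace.ofMatrix hM) v
  rw [h]
  congr 1

lemma cs_ofMatrix {n : Type*} [Fintype n] {M : Matrix n n ℝ} (hM : M.PosDef)
    (x y : n → ℝ) : x ⬝ᵥ M *ᵥ y ≤ Real.sqrt (x ⬝ᵥ M *ᵥ x) * Real.sqrt (y ⬝ᵥ M *ᵥ y) := by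
  have h := @real_inner_le_norm (n → ℝ)
    (NormedAddCommGroup.ofMatrix hM).toSeminormedAddCommGroup
    (InnerProductSpace.ofMatrix hM) x y
  rw [norm_ofMatrix hM x, norm_ofMatrix hM y] at h
  refine le_trans (le_of_eq ?_) h
  show x ⬝ᵥ M *ᵥ y = star x ⬝ᵥ M *ᵥ y
  simp

lemma tri_ofMatrix {n : Type*} [Fintype n] {M : Matrix n n ℝ} (hM : M.PosDef)
    (a b : n → ℝ) : Real.sqrt (a ⬝ᵥ M *ᵥ a) - Real.sqrt (b ⬝ᵥ M *ᵥ b)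
      ≤ Real.sqrt ((a - b) ⬝ᵥ M *ᵥ (a - b)) := by
  rw [← norm_ofMatrix hM a, ← norm_ofMatrix hM b, ← norm_ofMatrix hM (a - b)]
  exact @norm_sub_norm_le _ (NormedAddCommGroup.ofMatrix hM).toSeminormedAddCommGroup a b

lemma dot_nonneg_self {n : Type*} [Fintype n] (v : n → ℝ) : 0 ≤ v ⬝ᵥ v :=
  Finset.sum_nonneg fun i _ => mul_self_nonneg _

lemma inv_quad_le {n : Type*} [Fintype n] [DecidableEq n] {A B : Matrix n n ℝ}
    (hA : A.PosDef) (hB : B.PosDef) (hBA : (B - A).PosSemidef) (z : n → ℝ) :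
    z ⬝ᵥ B⁻¹ *ᵥ z ≤ z ⬝ᵥ A⁻¹ *ᵥ z := by
  have hAd : IsUnit A.det := (Matrix.isUnit_iff_isUnit_det A).mp hA.isUnit
  have hBd : IsUnit B.det := (Matrix.isUnit_iff_isUnit_det B).mp hB.isUnit
  set u := B⁻¹ *ᵥ z with hu
  set w := A⁻¹ *ᵥ z with hw
  have hAw : A *ᵥ w = z := by
    rw [hw, Matrix.mulVec_mulVec, Matrix.mul_nonsing_inv A hAd, Matrix.one_mulVec]
  have hBu : B *ᵥ u = z := by
    rw [hu, Matrix.mulVec_mulVec, Matrix.mul_nonsing_inv B hBd, Matrix.one_mulVec]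
  set s := z ⬝ᵥ B⁻¹ *ᵥ z with hs
  set r := z ⬝ᵥ A⁻¹ *ᵥ z with hr
  have h1 : u ⬝ᵥ A *ᵥ w = s := by rw [hAw, hs, ← hu, dotProduct_comm]
  have h3 : u ⬝ᵥ B *ᵥ u = s := by rw [hBu, hs, ← hu, dotProduct_comm]
  have h4 : w ⬝ᵥ A *ᵥ w = r := by rw [hAw, hr, ← hw, dotProduct_comm]
  have h2 : u ⬝ᵥ A *ᵥ u ≤ s := by
    have := hBA.dotProduct_mulVec_nonneg u
    rw [Matrix.sub_mulVec, dotProduct_sub, star_trivial] at this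
    linarith [h3]
  have hs0 : 0 ≤ s := (hB.inv.posSemidef).dotProduct_mulVec_nonneg z
  have hr0 : 0 ≤ r := (hA.inv.posSemidef).dotProduct_mulVec_nonneg z
  have hcs := cs_ofMatrix hA u w
  rw [h1, h4] at hcs
  have hmono : Real.sqrt (u ⬝ᵥ A *ᵥ u) ≤ Real.sqrt s := Real.sqrt_le_sqrt h2
  have : s ≤ Real.sqrt s * Real.sqrt r := by
    calc s ≤ Real.sqrt (u ⬝ᵥ A *ᵥ u) * Real.sqrt r := hcs
    _ ≤ Real.sqrt s * Real.sqrt r := by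
        exact mul_le_mul_of_nonneg_right hmono (Real.sqrt_nonneg _)
  nlinarith [Real.sq_sqrt hs0, Real.sq_sqrt hr0, Real.sqrt_nonneg s, Real.sqrt_nonneg r]

lemma quad_le_iSup {n : Type*} [Fintype n] [DecidableEq n] [Nonempty n]
    {A : Matrix n n ℝ} (hA : A.IsHermitian) (x : n → ℝ) :
    x ⬝ᵥ A *ᵥ x ≤ (⨆ i, hA.eigenvalues i) * (x ⬝ᵥ x) := by
  set U : Matrix n n ℝ := (hA.eigenvectorUnitary : Matrix n n ℝ) with hU
  have hUU : U * Uᵀ = 1 := by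
    have := (Matrix.mem_unitaryGroup_iff).mp hA.eigenvectorUnitary.2
    rwa [Matrix.star_eq_conjTranspose, Matrix.conjTranspose_eq_transpose_of_trivial] at this
  set y := Uᵀ *ᵥ x with hy
  have hyU : y = x ᵥ* U := by rw [hy, Matrix.mulVec_transpose]
  have hyx : y ⬝ᵥ y = x ⬝ᵥ x := by
    calc y ⬝ᵥ y = (x ᵥ* U) ⬝ᵥ y := by rw [← hyU]
    _ = x ⬝ᵥ (U *ᵥ y) := (Matrix.dotProduct_mulVec x U y).symm
    _ = x ⬝ᵥ x := by rw [hy, Matrix.mulVec_mulVec, hUU, Matrix.one_mulVec]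
  have hdiag : x ⬝ᵥ A *ᵥ x = y ⬝ᵥ (Matrix.diagonal hA.eigenvalues) *ᵥ y := by
    conv_lhs => rw [hA.spectral_theorem]
    rw [Unitary.conjStarAlgAut_apply, Matrix.star_eq_conjTranspose,
      Matrix.conjTranspose_eq_transpose_of_trivial,
      ← Matrix.mulVec_mulVec, ← Matrix.mulVec_mulVec, ← hU, ← hy,
      Matrix.dotProduct_mulVec, ← hyU]
    have hco : (RCLike.ofReal ∘ hA.eigenvalues : n → ℝ) = hA.eigenvalues := by
      ext i; simp
    rw [hco]
  rw [hdiag, ← hyx]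
  have hbdd : BddAbove (Set.range hA.eigenvalues) := Set.Finite.bddAbove (Set.finite_range _)
  calc y ⬝ᵥ (Matrix.diagonal hA.eigenvalues) *ᵥ y
      = ∑ i, hA.eigenvalues i * (y i * y i) := by
        simp only [dotProduct, Matrix.mulVec_diagonal]
        exact Finset.sum_congr rfl fun i _ => by ring
    _ ≤ ∑ i, (⨆ j, hA.eigenvalues j) * (y i * y i) := by
        refine Finset.sum_le_sum fun i _ => ?_
        exact mul_le_mul_of_nonneg_right (le_ciSup hbdd i) (mul_self_nonneg _)
    _ = (⨆ i, hA.eigenvalues i) * (y ⬝ᵥ y) := by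
        rw [← Finset.mul_sum]; rfl

/-- For the linear model `Y = Xθ* + η` with `θ̂ = W⁻¹XᵀY`,
`W = W₀ + XᵀX`, one has
`√((θ̂−θ*)ᵀW(θ̂−θ*)) ≥ √((Xᵀη)ᵀW⁻¹(Xᵀη)) − (λmax(W₀)/√(λmin(W₀)))·‖θ*‖₂`. -/
theorem stmt_6 {d t : ℕ} (hd : 1 ≤ d) (ht : 1 ≤ t)
    (W0 : Matrix (Fin d) (Fin d) ℝ) (hW0 : W0.PosDef)
    (X : Matrix (Fin t) (Fin d) ℝ) (θstar : Fin d → ℝ) (η : Fin t → ℝ)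
    (Y : Fin t → ℝ) (hY : Y = X *ᵥ θstar + η)
    (W : Matrix (Fin d) (Fin d) ℝ) (hW : W = W0 + Xᵀ * X)
    (θhat : Fin d → ℝ) (hθhat : θhat = W⁻¹ *ᵥ (Xᵀ *ᵥ Y)) :
    Real.sqrt ((Xᵀ *ᵥ η) ⬝ᵥ (W⁻¹ *ᵥ (Xᵀ *ᵥ η)))
      - (⨆ i, hW0.1.eigenvalues i) / Real.sqrt (⨅ i, hW0.1.eigenvalues i)
        * Real.sqrt (θstar ⬝ᵥ θstar)
      ≤ Real.sqrt ((θhat - θstar) ⬝ᵥ (W *ᵥ (θhat - θstar))) := by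
  haveI : Nonempty (Fin d) := Fin.pos_iff_nonempty.mp hd
  have hXX : (Xᵀ * X).PosSemidef := by
    have h := Matrix.posSemidef_conjTranspose_mul_self X
    rwa [Matrix.conjTranspose_eq_transpose_of_trivial] at h
  have hWpd : W.PosDef := by rw [hW]; exact hW0.add_posSemidef hXX
  have hWinv : W⁻¹.PosDef := hWpd.inv
  have hWdet : IsUnit W.det := (Matrix.isUnit_iff_isUnit_det W).mp hWpd.isUnit
  set a := Xᵀ *ᵥ η with ha
  set b := W0 *ᵥ θstar with hb
  set z := a - b with hz
  have hkey : θhat - θstar = W⁻¹ *ᵥ z := by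
    have hθs : θstar = W⁻¹ *ᵥ (W *ᵥ θstar) := by
      rw [Matrix.mulVec_mulVec, Matrix.nonsing_inv_mul W hWdet, Matrix.one_mulVec]
    have h5 : Xᵀ *ᵥ Y = W *ᵥ θstar + z := by
      rw [hY, hW, Matrix.mulVec_add, Matrix.add_mulVec, Matrix.mulVec_mulVec, hz, ha, hb]
      abel
    rw [hθhat, h5, Matrix.mulVec_add, ← hθs]
    abel
  have hquad : (θhat - θstar) ⬝ᵥ W *ᵥ (θhat - θstar) = z ⬝ᵥ W⁻¹ *ᵥ z := by
    rw [hkey, Matrix.mulVec_mulVec, Matrix.mul_nonsing_inv W hWdet, Matrix.one_mulVec,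
      dotProduct_comm]
  have htri := tri_ofMatrix hWinv a b
  have hble : b ⬝ᵥ W⁻¹ *ᵥ b ≤ θstar ⬝ᵥ W0 *ᵥ θstar := by
    have hsub : (W - W0).PosSemidef := by
      rw [hW]; simpa using hXX
    have h1 := inv_quad_le hW0 hWpd hsub b
    have h2 : b ⬝ᵥ W0⁻¹ *ᵥ b = θstar ⬝ᵥ W0 *ᵥ θstar := by
      have hW0det : IsUnit W0.det := (Matrix.isUnit_iff_isUnit_det W0).mp hW0.isUnit
      rw [hb, Matrix.mulVec_mulVec, Matrix.nonsing_inv_mul W0 hW0det, Matrix.one_mulVec,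
        dotProduct_comm]
    linarith
  have heig := quad_le_iSup hW0.1 θstar
  set lmax := ⨆ i, hW0.1.eigenvalues i with hlmax
  set lmin := ⨅ i, hW0.1.eigenvalues i with hlmin
  obtain ⟨j, hj⟩ := Finite.exists_min hW0.1.eigenvalues
  have hinf_le : lmin ≤ hW0.1.eigenvalues j :=
    ciInf_le (Set.Finite.bddBelow (Set.finite_range _)) j
  have hle_inf : hW0.1.eigenvalues j ≤ lmin := le_ciInf hj
  have hmin_pos : 0 < lmin := lt_of_lt_of_le (hW0.eigenvalues_pos j) hle_inf
  have hjmax : hW0.1.eigenvalues j ≤ lmax :=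
    le_ciSup (Set.Finite.bddAbove (Set.finite_range _)) j
  have hminmax : lmin ≤ lmax := le_trans hinf_le hjmax
  have hmax_pos : 0 < lmax := lt_of_lt_of_le hmin_pos hminmax
  have hθθ : 0 ≤ θstar ⬝ᵥ θstar := dot_nonneg_self θstar
  have hchain : Real.sqrt (b ⬝ᵥ W⁻¹ *ᵥ b) ≤ lmax / Real.sqrt lmin * Real.sqrt (θstar ⬝ᵥ θstar) := by
    calc Real.sqrt (b ⬝ᵥ W⁻¹ *ᵥ b) ≤ Real.sqrt (lmax * (θstar ⬝ᵥ θstar)) :=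
          Real.sqrt_le_sqrt (by linarith)
    _ = Real.sqrt lmax * Real.sqrt (θstar ⬝ᵥ θstar) := Real.sqrt_mul hmax_pos.le _
    _ ≤ lmax / Real.sqrt lmin * Real.sqrt (θstar ⬝ᵥ θstar) := by
        refine mul_le_mul_of_nonneg_right ?_ (Real.sqrt_nonneg _)
        rw [le_div_iff₀ (Real.sqrt_pos.mpr hmin_pos)]
        nlinarith [Real.sq_sqrt hmax_pos.le, Real.sqrt_le_sqrt hminmax,
          Real.sqrt_nonneg lmax, Real.sqrt_nonneg lmin]
  rw [hquad]
  linarith
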